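/- The coefficients of e are bounded by 1: for all integers i ≥ k ≥ 2 one has 0 < q_{i,k}/q_{k,k} ≤ 1; consequently every coefficient of the formal power series e has absolute value at most 1, so e has geometrically bounded coefficients (with C = R = 1). -/

import Mathlib

/- STATEMENT 17: The coefficients of e are bounded by 1: 0 < q_{i,k}/q_{k,k} ≤ 1
   for i ≥ k ≥ 2, hence every coefficient of e has absolute value ≤ 1, so e has
   geometrically bounded coefficients with C = R = 1. -/

/-- The rising factorial (1/2)^{\overline{k−1}} = (1/2)(1/2+1)⋯(1/2+k−2). -/
def rise (k : ℕ) : ℚ := ∏ j ∈ Finset.range (k - 1), ((1 : ℚ) / 2 + j)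

/-- q_{i,k} = (i−1)! / (4^{k−1}·(i−k)!·(i+k−1)!·(1/2)^{\overline{k−1}}). -/
def q (i k : ℕ) : ℚ :=
  (Nat.factorial (i - 1) : ℚ) /
    (4 ^ (k - 1) * (Nat.factorial (i - k) : ℚ) * (Nat.factorial (i + k - 1) : ℚ) * rise k)

/-- The series e, with coefficient q_{i,k}/q_{k,k} at x^k z^i for i ≥ k ≥ 2
and zero coefficient at every other monomial. -/
noncomputable def eS : MvPowerSeries (Fin 3) ℂ :=
  fun d => if 2 ≤ d 0 ∧ d 1 = 0 ∧ d 0 ≤ d 2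
    then ((q (d 2) (d 0) / q (d 0) (d 0) : ℚ) : ℂ) else 0

lemma rise_pos (k : ℕ) : 0 < rise k := by
  unfold rise
  apply Finset.prod_pos
  intro j _
  positivity

lemma q_pos (i k : ℕ) : 0 < q i k := by
  unfold q
  have h := rise_pos k
  have f1 : (0:ℚ) < (Nat.factorial (i-1) : ℚ) := by exact_mod_cast (Nat.factorial_pos _)
  have f2 : (0:ℚ) < (Nat.factorial (i-k) : ℚ) := by exact_mod_cast (Nat.factorial_pos _)
  have f3 : (0:ℚ) < (Nat.factorial (i+k-1) : ℚ) := by exact_mod_cast (Nat.factorial_pos _)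
  positivity

lemma fact_ineq (k : ℕ) (hk : 2 ≤ k) : ∀ i, k ≤ i →
    Nat.factorial (i-1) * Nat.factorial (2*k-1) ≤
      Nat.factorial (i-k) * Nat.factorial (i+k-1) * Nat.factorial (k-1) := by
  intro i hi
  induction i, hi using Nat.le_induction with
  | base =>
      have h1 : k - k = 0 := Nat.sub_self k
      have h2 : k + k - 1 = 2*k - 1 := by omega
      rw [h1, h2, Nat.factorial_zero, one_mul, mul_comm]
  | succ i hi ih =>
      have e1 : i + 1 - 1 = i := by omega
      have e2 : i + 1 - k = (i - k) + 1 := by omega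
      have e3 : i + 1 + k - 1 = (i + k - 1) + 1 := by omega
      rw [e1, e2, e3, Nat.factorial_succ, Nat.factorial_succ]
      have hfs : Nat.factorial i = i * Nat.factorial (i-1) := by
        conv_lhs => rw [show i = (i-1)+1 by omega]
        rw [Nat.factorial_succ]
        congr 2
        omega
      have hcoef : i ≤ ((i-k)+1) * ((i+k-1)+1) := by
        have h := Nat.le_mul_of_pos_left ((i+k-1)+1) (show 0 < (i-k)+1 by omega)
        omega
      calc Nat.factorial i * Nat.factorial (2*k-1)
          = i * (Nat.factorial (i-1) * Nat.factorial (2*k-1)) := by rw [hfs]; ring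
        _ ≤ (((i-k)+1) * ((i+k-1)+1)) *
              (Nat.factorial (i-k) * Nat.factorial (i+k-1) * Nat.factorial (k-1)) :=
            Nat.mul_le_mul hcoef ih
        _ = ((i-k)+1) * Nat.factorial (i-k) * (((i+k-1)+1) * Nat.factorial (i+k-1)) *
              Nat.factorial (k-1) := by ring

lemma ratio_eq (i k : ℕ) (hk : 2 ≤ k) (hik : k ≤ i) :
    q i k / q k k = ((Nat.factorial (i-1) * Nat.factorial (2*k-1) : ℕ) : ℚ) /
      ((Nat.factorial (i-k) * Nat.factorial (i+k-1) * Nat.factorial (k-1) : ℕ) : ℚ) := by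
  unfold q
  have h1 : k - k = 0 := Nat.sub_self k
  have h2 : k + k - 1 = 2*k - 1 := by omega
  rw [h1, h2, Nat.factorial_zero]
  have hr : rise k ≠ 0 := (rise_pos k).ne'
  have f1 : ((Nat.factorial (i-1)) : ℚ) ≠ 0 := Nat.cast_ne_zero.mpr (Nat.factorial_ne_zero _)
  have f2 : ((Nat.factorial (i-k)) : ℚ) ≠ 0 := Nat.cast_ne_zero.mpr (Nat.factorial_ne_zero _)
  have f3 : ((Nat.factorial (i+k-1)) : ℚ) ≠ 0 := Nat.cast_ne_zero.mpr (Nat.factorial_ne_zero _)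
  have f4 : ((Nat.factorial (2*k-1)) : ℚ) ≠ 0 := Nat.cast_ne_zero.mpr (Nat.factorial_ne_zero _)
  have f5 : ((Nat.factorial (k-1)) : ℚ) ≠ 0 := Nat.cast_ne_zero.mpr (Nat.factorial_ne_zero _)
  have f6 : (4:ℚ) ^ (k-1) ≠ 0 := by positivity
  push_cast
  field_simp

lemma ratio_bounds (i k : ℕ) (hk : 2 ≤ k) (hik : k ≤ i) :
    0 < q i k / q k k ∧ q i k / q k k ≤ 1 := by
  constructor
  · exact div_pos (q_pos i k) (q_pos k k)
  · rw [ratio_eq i k hk hik]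
    apply div_le_one_of_le₀
    · exact_mod_cast fact_ineq k hk i hik
    · positivity

theorem e_coefficients_bounded_by_one :
    (∀ i k : ℕ, 2 ≤ k → k ≤ i → 0 < q i k / q k k ∧ q i k / q k k ≤ 1) ∧
    (∀ d : Fin 3 →₀ ℕ, ‖MvPowerSeries.coeff d eS‖ ≤ 1) ∧
    -- geometric boundedness with C = R = 1
    (∀ d : Fin 3 →₀ ℕ, ‖MvPowerSeries.coeff d eS‖ ≤
      1 * 1 ^ (d.sum fun _ m => m)) := by
  have key : ∀ d : Fin 3 →₀ ℕ, ‖MvPowerSeries.coeff d eS‖ ≤ 1 := by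
    intro d
    rw [MvPowerSeries.coeff_apply]
    show ‖(if 2 ≤ d 0 ∧ d 1 = 0 ∧ d 0 ≤ d 2
      then ((q (d 2) (d 0) / q (d 0) (d 0) : ℚ) : ℂ) else 0)‖ ≤ 1
    split_ifs with h
    · obtain ⟨hb1, hb2⟩ := ratio_bounds (d 2) (d 0) h.1 h.2.2
      rw [show ((q (d 2) (d 0) / q (d 0) (d 0) : ℚ) : ℂ)
          = (((q (d 2) (d 0) / q (d 0) (d 0) : ℚ) : ℝ) : ℂ) by push_cast; ring,
        Complex.norm_real, Real.norm_eq_abs]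
      rw [abs_of_pos (by exact_mod_cast hb1)]
      exact_mod_cast hb2
    · simp
  refine ⟨fun i k hk hik => ratio_bounds i k hk hik, key, fun d => ?_⟩
  simpa using key d
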